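/- Let A ∈ ℂ^{m×n} with SVD A = UΣV*, target rank r, d = r+p, and R ∈ ℝ^{d×n}. With Σ₂, R₁ = V₁*R^T, R₂ = V₂*R^T as in the deterministic range-finder setup, suppose ‖R‖ ≤ √(n(1+ε)) and σ_min(R V₁)² ≥ (1−ε) with ε ∈ (0,1). Then for Y = AR^T, ‖(I − P_Y)A‖ ≤ σ_{r+1}(A) · √(1 + n(1+ε)/(1−ε)). -/

import Mathlib

open Matrix

/-- Euclidean norm of a real vector. -/
noncomputable def vnormR {α : Type*} [Fintype α] (x : α → ℝ) : ℝ := Real.sqrt (∑ i, x i ^ 2)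

/-- Euclidean norm of a complex vector. -/
noncomputable def vnormC {α : Type*} [Fintype α] (x : α → ℂ) : ℝ :=
  Real.sqrt (∑ i, ‖x i‖ ^ 2)

/-- Spectral norm of a real matrix. -/
noncomputable def specNorm {α β : Type*} [Fintype α] [Fintype β]
    (A : Matrix α β ℝ) : ℝ :=
  sSup {c : ℝ | ∃ x : β → ℝ, vnormR x = 1 ∧ c = vnormR (A.mulVec x)}

/-- Spectral norm of a complex matrix. -/
noncomputable def specNormC {α β : Type*} [Fintype α] [Fintype β]
    (A : Matrix α β ℂ) : ℝ :=
  sSup {c : ℝ | ∃ x : β → ℂ, vnormC x = 1 ∧ c = vnormC (A.mulVec x)}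

/-- Smallest singular value of a complex matrix: `σ_min(B) = min_{‖x‖=1} ‖Bx‖`. -/
noncomputable def sigmaMinC {α β : Type*} [Fintype α] [Fintype β]
    (B : Matrix α β ℂ) : ℝ :=
  sInf {c : ℝ | ∃ x : β → ℂ, vnormC x = 1 ∧ c = vnormC (B.mulVec x)}

open scoped Matrix.Norms.L2Operator

namespace RFaux

variable {α β γ : Type*} [Fintype α] [Fintype β] [Fintype γ]

variable {α β γ : Type*} [Fintype α] [Fintype β] [Fintype γ]

noncomputable def en {α : Type*} [Fintype α] (x : α → ℂ) : ℝ :=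
  ‖(EuclideanSpace.equiv α ℂ).symm x‖
noncomputable def enR {α : Type*} [Fintype α] (x : α → ℝ) : ℝ :=
  ‖(EuclideanSpace.equiv α ℝ).symm x‖

lemma en_eq (x : α → ℂ) : en x = Real.sqrt (∑ i, ‖x i‖ ^ 2) := by
  rw [en, EuclideanSpace.norm_eq]; rfl
lemma vnormC_eq (x : α → ℂ) : vnormC x = en x := (en_eq x).symm
lemma en_nonneg (x : α → ℂ) : 0 ≤ en x := norm_nonneg _
lemma en_sq (x : α → ℂ) : en x ^ 2 = ∑ i, ‖x i‖ ^ 2 := by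
  rw [en_eq, Real.sq_sqrt]; positivity
lemma en_eq_zero {x : α → ℂ} (h : en x = 0) : x = 0 := by
  have h2 : (EuclideanSpace.equiv α ℂ).symm x = 0 := norm_eq_zero.mp h
  simpa using congrArg (EuclideanSpace.equiv α ℂ) h2
lemma en_smul (c : ℂ) (x : α → ℂ) : en (c • x) = ‖c‖ * en x := by
  have : (EuclideanSpace.equiv α ℂ).symm (c • x) = c • (EuclideanSpace.equiv α ℂ).symm x := rfl
  rw [en, this, norm_smul, en]
lemma enR_eq (x : α → ℝ) : enR x = Real.sqrt (∑ i, x i ^ 2) := by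
  rw [enR, EuclideanSpace.norm_eq]
  simp [Real.norm_eq_abs, sq_abs]
lemma vnormR_eq (x : α → ℝ) : vnormR x = enR x := (enR_eq x).symm
lemma mulVec_norm_le [DecidableEq β] (A : Matrix α β ℂ) (x : β → ℂ) :
    en (A *ᵥ x) ≤ ‖A‖ * en x :=
  Matrix.l2_opNorm_mulVec A ((EuclideanSpace.equiv β ℂ).symm x)
lemma mulVec_norm_leR [DecidableEq β] (A : Matrix α β ℝ) (x : β → ℝ) :
    enR (A *ᵥ x) ≤ ‖A‖ * enR x :=
  Matrix.l2_opNorm_mulVec A ((EuclideanSpace.equiv β ℝ).symm x)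
lemma opNorm_le [DecidableEq β] (A : Matrix α β ℂ) {c : ℝ} (hc : 0 ≤ c)
    (h : ∀ x : β → ℂ, en (A *ᵥ x) ≤ c * en x) : ‖A‖ ≤ c := by
  rw [Matrix.l2_opNorm_def]
  apply ContinuousLinearMap.opNorm_le_bound _ hc
  intro x
  simpa [Matrix.toEuclideanLin_apply, en] using h ((WithLp.equiv 2 (β → ℂ)) x)

/-- specNormC equals the L2 operator norm. -/
lemma specNormC_eq [DecidableEq β] (A : Matrix α β ℂ) : specNormC A = ‖A‖ := by
  have hub : ∀ c ∈ {c : ℝ | ∃ x : β → ℂ, vnormC x = 1 ∧ c = vnormC (A.mulVec x)}, c ≤ ‖A‖ := by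
    rintro c ⟨x, hx, rfl⟩
    rw [vnormC_eq] at hx ⊢
    simpa [hx] using mulVec_norm_le A x
  have hbdd : BddAbove {c : ℝ | ∃ x : β → ℂ, vnormC x = 1 ∧ c = vnormC (A.mulVec x)} :=
    ⟨‖A‖, hub⟩
  apply le_antisymm
  · exact Real.sSup_le hub (norm_nonneg _)
  · apply opNorm_le A (Real.sSup_nonneg (by rintro c ⟨x, hx, rfl⟩; rw [vnormC_eq]; exact en_nonneg _))
    intro x
    rcases eq_or_ne (en x) 0 with h0 | h0
    · rw [en_eq_zero h0, Matrix.mulVec_zero]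
      simp [en_eq]
    · set u : β → ℂ := ((en x)⁻¹ : ℂ) • x with hu
      have hxpos : 0 < en x := lt_of_le_of_ne (en_nonneg x) (Ne.symm h0)
      have hu1 : en u = 1 := by
        rw [hu, en_smul, norm_inv, Complex.norm_real, Real.norm_eq_abs, abs_of_pos hxpos]
        exact inv_mul_cancel₀ h0
      have hmem : en (A *ᵥ u) ∈ {c : ℝ | ∃ x : β → ℂ, vnormC x = 1 ∧ c = vnormC (A.mulVec x)} :=
        ⟨u, by rw [vnormC_eq, hu1], by rw [vnormC_eq]⟩
      have hle := le_csSup hbdd hmem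
      have hAu : en (A *ᵥ u) = (en x)⁻¹ * en (A *ᵥ x) := by
        rw [hu, Matrix.mulVec_smul, en_smul, norm_inv, Complex.norm_real, Real.norm_eq_abs,
          abs_of_pos hxpos]
      rw [hAu] at hle
      calc en (A *ᵥ x) = ((en x)⁻¹ * en (A *ᵥ x)) * en x := by
            rw [mul_comm ((en x)⁻¹) _, mul_assoc, inv_mul_cancel₀ h0, mul_one]
        _ ≤ sSup _ * en x := mul_le_mul_of_nonneg_right hle (en_nonneg x)

/-- The L2 operator norm is at most specNorm (real version; only direction needed). -/
lemma opNorm_le_specNorm [DecidableEq β] (A : Matrix α β ℝ) : ‖A‖ ≤ specNorm A := by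
  have hub : ∀ c ∈ {c : ℝ | ∃ x : β → ℝ, vnormR x = 1 ∧ c = vnormR (A.mulVec x)}, c ≤ ‖A‖ := by
    rintro c ⟨x, hx, rfl⟩
    rw [vnormR_eq] at hx ⊢
    simpa [hx] using mulVec_norm_leR A x
  have hbdd : BddAbove {c : ℝ | ∃ x : β → ℝ, vnormR x = 1 ∧ c = vnormR (A.mulVec x)} :=
    ⟨‖A‖, hub⟩
  rw [Matrix.l2_opNorm_def]
  apply ContinuousLinearMap.opNorm_le_bound _
    (Real.sSup_nonneg (by rintro c ⟨x, hx, rfl⟩; rw [vnormR_eq]; exact norm_nonneg _))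
  intro x0
  set x : β → ℝ := (WithLp.equiv 2 (β → ℝ)) x0 with hx0
  suffices h : enR (A *ᵥ x) ≤ specNorm A * enR x by
    simpa [Matrix.toEuclideanLin_apply, enR, hx0, specNorm] using h
  rcases eq_or_ne (enR x) 0 with h0 | h0
  · have h2 : (EuclideanSpace.equiv β ℝ).symm x = 0 := norm_eq_zero.mp h0
    have hx : x = 0 := by simpa using congrArg (EuclideanSpace.equiv β ℝ) h2
    rw [hx, Matrix.mulVec_zero]
    simp [enR_eq]
  · have hxpos : 0 < enR x := lt_of_le_of_ne (norm_nonneg _) (Ne.symm h0)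
    set u : β → ℝ := (enR x)⁻¹ • x with hu
    have husmul : (EuclideanSpace.equiv β ℝ).symm u
        = (enR x)⁻¹ • (EuclideanSpace.equiv β ℝ).symm x := rfl
    have hu1 : enR u = 1 := by
      rw [enR, husmul, norm_smul, Real.norm_eq_abs, abs_of_pos (inv_pos.mpr hxpos)]
      exact inv_mul_cancel₀ h0
    have hmem : enR (A *ᵥ u) ∈ {c : ℝ | ∃ x : β → ℝ, vnormR x = 1 ∧ c = vnormR (A.mulVec x)} :=
      ⟨u, by rw [vnormR_eq, hu1], by rw [vnormR_eq]⟩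
    have hle := le_csSup hbdd hmem
    have hAu : enR (A *ᵥ u) = (enR x)⁻¹ * enR (A *ᵥ x) := by
      rw [hu, Matrix.mulVec_smul]
      have : (EuclideanSpace.equiv α ℝ).symm ((enR x)⁻¹ • (A *ᵥ x))
          = (enR x)⁻¹ • (EuclideanSpace.equiv α ℝ).symm (A *ᵥ x) := rfl
      rw [enR, this, norm_smul]
      simp [abs_of_pos (inv_pos.mpr hxpos), enR]
    rw [hAu] at hle
    calc enR (A *ᵥ x) = ((enR x)⁻¹ * enR (A *ᵥ x)) * enR x := by
          rw [mul_comm ((enR x)⁻¹) _, mul_assoc, inv_mul_cancel₀ h0, mul_one]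
      _ ≤ specNorm A * enR x := mul_le_mul_of_nonneg_right hle (norm_nonneg _)

variable {α β γ : Type*} [Fintype α] [Fintype β] [Fintype γ]

lemma re_star_dot (v : α → ℂ) : (star v ⬝ᵥ v).re = en v ^ 2 := by
  rw [en_sq, dotProduct, Complex.re_sum]
  refine Finset.sum_congr rfl fun i _ => ?_
  show (star (v i) * v i).re = ‖v i‖ ^ 2
  have : star (v i) * v i = (Complex.normSq (v i) : ℂ) := by
    rw [mul_comm]; exact Complex.mul_conj _
  rw [this]
  rw [Complex.ofReal_re, Complex.normSq_eq_norm_sq]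

lemma dot_le (x y : α → ℂ) : ‖star x ⬝ᵥ y‖ ≤ en x * en y := by
  have h : star x ⬝ᵥ y = (inner ℂ ((EuclideanSpace.equiv α ℂ).symm x)
      ((EuclideanSpace.equiv α ℂ).symm y) : ℂ) := by
    simp [PiLp.inner_apply, dotProduct, RCLike.inner_apply, mul_comm]
  rw [h, en, en]
  exact norm_inner_le_norm _ _

lemma re_quad (B : Matrix α β ℂ) (v : β → ℂ) :
    (star v ⬝ᵥ ((Bᴴ * B) *ᵥ v)).re = en (B *ᵥ v) ^ 2 := by
  rw [← Matrix.mulVec_mulVec, Matrix.dotProduct_mulVec, ← Matrix.star_mulVec]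
  exact re_star_dot _

lemma en_add_le (x y : α → ℂ) : en (x + y) ≤ en x + en y := norm_add_le _ _

lemma le_of_sq_le_sq {a t : ℝ} (ha : 0 ≤ a) (ht : 0 ≤ t) (h : a ^ 2 ≤ t ^ 2) : a ≤ t := by
  nlinarith

/-- isometries (in the sense `Wᴴ W = 1`) have operator norm at most 1 -/
lemma norm_le_one_of_isometry [DecidableEq α] [DecidableEq β] (W : Matrix α β ℂ)
    (h : Wᴴ * W = 1) : ‖W‖ ≤ 1 := by
  have h2 := Matrix.l2_opNorm_conjTranspose_mul_self W
  rw [h] at h2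
  have hone : ‖(1 : Matrix β β ℂ)‖ ≤ 1 := by
    apply opNorm_le _ zero_le_one
    intro x; rw [Matrix.one_mulVec, one_mul]
  nlinarith [norm_nonneg W]

/-- hermitian idempotents have norm at most 1 -/
lemma norm_le_one_of_proj [DecidableEq α] (Q : Matrix α α ℂ) (h1 : Qᴴ = Q)
    (h2 : Q * Q = Q) : ‖Q‖ ≤ 1 := by
  have h3 := Matrix.l2_opNorm_conjTranspose_mul_self Q
  rw [h1, h2] at h3
  nlinarith [norm_nonneg Q]

/-- Existence of a right inverse of `Bᴴ` with controlled norm, given a lower bound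
on the smallest singular value of `B`. -/
lemma pinv_exists [DecidableEq α] [DecidableEq β] (B : Matrix α β ℂ) {c : ℝ} (hc : 0 < c)
    (h : ∀ x : β → ℂ, c * en x ^ 2 ≤ en (B *ᵥ x) ^ 2) :
    ∃ G : Matrix α β ℂ, Bᴴ * G = 1 ∧ ‖G‖ ≤ Real.sqrt (1 / c) := by
  set M : Matrix β β ℂ := Bᴴ * B with hM
  have hinj : Function.Injective M.mulVecLin := by
    intro x y hxy
    have hz : M *ᵥ (x - y) = 0 := by
      have h1 : M *ᵥ x - M *ᵥ y = 0 := by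
        simpa [Matrix.mulVecLin_apply] using sub_eq_zero_of_eq hxy
      rw [Matrix.mulVec_sub]
      exact h1
    have h0 : en (B *ᵥ (x - y)) ^ 2 = 0 := by
      have hq := re_quad B (x - y)
      rw [← hM, hz] at hq
      simpa using hq.symm
    have hxy0 : en (x - y) = 0 := by
      by_contra hne
      have hpos : 0 < en (x - y) := lt_of_le_of_ne (en_nonneg _) (Ne.symm hne)
      have := h (x - y)
      nlinarith [pow_pos hpos 2]
    have := en_eq_zero hxy0
    exact sub_eq_zero.mp this
  have hsurj : Function.Surjective M.mulVecLin :=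
    (LinearMap.injective_iff_surjective).mp hinj
  choose w hw using fun j : β => hsurj (Pi.single j 1)
  set W : Matrix β β ℂ := Matrix.of (fun i j => w j i) with hWdef
  have hMW : M * W = 1 := by
    ext i j
    have h1 : (M *ᵥ w j) i = (Pi.single j 1 : β → ℂ) i := by
      rw [show M *ᵥ w j = M.mulVecLin (w j) from rfl, hw j]
    have h2 : (M * W) i j = (M *ᵥ w j) i := by
      simp only [Matrix.mul_apply, Matrix.mulVec, dotProduct, hWdef, Matrix.of_apply]
    rw [h2, h1, Matrix.one_apply, Pi.single_apply]
  have hBW : Bᴴ * (B * W) = 1 := by rw [← Matrix.mul_assoc, ← hM, hMW]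
  refine ⟨B * W, hBW, ?_⟩
  apply opNorm_le _ (Real.sqrt_nonneg _)
  intro x
  set wx := W *ᵥ x with hwx
  have hMx : M *ᵥ wx = x := by rw [hwx, Matrix.mulVec_mulVec, hMW, Matrix.one_mulVec]
  have e1 : en (B *ᵥ wx) ^ 2 = (star wx ⬝ᵥ x).re := by
    rw [← hMx]
    exact (re_quad B wx).symm
  have e2 : (star wx ⬝ᵥ x).re ≤ en wx * en x :=
    le_trans (Complex.re_le_norm _) (by exact dot_le _ _)
  have e3 : c * en wx ^ 2 ≤ en wx * en x := le_trans (h wx) (by rw [e1]; exact e2)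
  have e4 : c * en wx ≤ en x := by
    rcases eq_or_lt_of_le (en_nonneg wx) with h0 | h0
    · rw [← h0, mul_zero]; exact en_nonneg x
    · nlinarith
  have hGx : (B * W) *ᵥ x = B *ᵥ wx := by rw [hwx, Matrix.mulVec_mulVec]
  rw [hGx]
  apply le_of_sq_le_sq (en_nonneg _) (mul_nonneg (Real.sqrt_nonneg _) (en_nonneg _))
  rw [mul_pow, Real.sq_sqrt (by positivity : (0:ℝ) ≤ 1 / c)]
  have e5 : c * (en (B *ᵥ wx) ^ 2) ≤ en x ^ 2 := by nlinarith [en_nonneg x, en_nonneg wx]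
  rw [one_div, inv_mul_eq_div, le_div_iff₀ hc]
  linarith
lemma enR_sq (x : α → ℝ) : enR x ^ 2 = ∑ i, x i ^ 2 := by
  rw [enR, EuclideanSpace.norm_eq, Real.sq_sqrt (by positivity)]
  simp [Real.norm_eq_abs, sq_abs]
lemma enR_nonneg (x : α → ℝ) : 0 ≤ enR x := norm_nonneg _
lemma norm_sq_complex (z : ℂ) : ‖z‖ ^ 2 = z.re ^ 2 + z.im ^ 2 := by
  rw [Complex.sq_norm, Complex.normSq_apply]; ring

/-- complexification does not increase the L2 operator norm -/
lemma map_complex_norm_le [DecidableEq β] (R : Matrix α β ℝ) :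
    ‖R.map (fun a => (a : ℂ))‖ ≤ ‖R‖ := by
  apply opNorm_le _ (norm_nonneg R)
  intro x
  set xr : β → ℝ := fun j => (x j).re with hxr
  set xi : β → ℝ := fun j => (x j).im with hxi
  have hre : ∀ i, ((R.map (fun a => (a : ℂ))) *ᵥ x) i
      = ((R *ᵥ xr) i : ℂ) + ((R *ᵥ xi) i : ℂ) * Complex.I := by
    intro i
    apply Complex.ext <;>
      simp [Matrix.mulVec, dotProduct, Matrix.map_apply, Complex.re_sum, Complex.im_sum,
        Complex.mul_re, Complex.mul_im, hxr, hxi]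
  have hsq : en ((R.map (fun a => (a : ℂ))) *ᵥ x) ^ 2
      = enR (R *ᵥ xr) ^ 2 + enR (R *ᵥ xi) ^ 2 := by
    rw [en_sq, enR_sq, enR_sq, ← Finset.sum_add_distrib]
    refine Finset.sum_congr rfl fun i _ => ?_
    rw [hre i, norm_sq_complex]
    simp
  have hx : en x ^ 2 = enR xr ^ 2 + enR xi ^ 2 := by
    rw [en_sq, enR_sq, enR_sq, ← Finset.sum_add_distrib]
    exact Finset.sum_congr rfl fun j _ => norm_sq_complex (x j)
  have h1 := mulVec_norm_leR R xr
  have h2 := mulVec_norm_leR R xi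
  apply le_of_sq_le_sq (en_nonneg _) (mul_nonneg (norm_nonneg R) (en_nonneg x))
  rw [mul_pow, hsq, hx]
  nlinarith [enR_nonneg (R *ᵥ xr), enR_nonneg (R *ᵥ xi), enR_nonneg xr, enR_nonneg xi,
    norm_nonneg R]

/-- norm bound for a matrix made of two column blocks -/
lemma fromColumns_norm_le [DecidableEq β] [DecidableEq γ]
    (F₁ : Matrix α β ℂ) (F₂ : Matrix α γ ℂ) :
    ‖Matrix.fromCols F₁ F₂‖ ≤ Real.sqrt (‖F₁‖ ^ 2 + ‖F₂‖ ^ 2) := by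
  apply opNorm_le _ (Real.sqrt_nonneg _)
  intro x
  have hx : x = Sum.elim (x ∘ Sum.inl) (x ∘ Sum.inr) := by
    funext j; cases j <;> rfl
  rw [hx, Matrix.fromCols_mulVec_sumElim]
  have h1 := mulVec_norm_le F₁ (x ∘ Sum.inl)
  have h2 := mulVec_norm_le F₂ (x ∘ Sum.inr)
  have htri := en_add_le (F₁ *ᵥ (x ∘ Sum.inl)) (F₂ *ᵥ (x ∘ Sum.inr))
  have hxs : en (Sum.elim (x ∘ Sum.inl) (x ∘ Sum.inr)) ^ 2
      = en (x ∘ Sum.inl) ^ 2 + en (x ∘ Sum.inr) ^ 2 := by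
    rw [en_sq, en_sq, en_sq, Fintype.sum_sum_type]
    simp
  apply le_of_sq_le_sq (en_nonneg _) (mul_nonneg (Real.sqrt_nonneg _) (en_nonneg _))
  rw [mul_pow, Real.sq_sqrt (by positivity), hxs]
  nlinarith [en_nonneg (F₁ *ᵥ (x ∘ Sum.inl)), en_nonneg (F₂ *ᵥ (x ∘ Sum.inr)),
    en_nonneg (x ∘ Sum.inl), en_nonneg (x ∘ Sum.inr), norm_nonneg F₁, norm_nonneg F₂,
    sq_nonneg (‖F₁‖ * en (x ∘ Sum.inr) - ‖F₂‖ * en (x ∘ Sum.inl)),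
    en_nonneg (F₁ *ᵥ (x ∘ Sum.inl) + F₂ *ᵥ (x ∘ Sum.inr))]

lemma en_zero : en (0 : α → ℂ) = 0 := by simp [en_eq]

lemma en_smul_inv (t : ℝ) (x : α → ℂ) : en (((t : ℂ))⁻¹ • x) = |t|⁻¹ * en x := by
  rw [en_smul, norm_inv, Complex.norm_real, Real.norm_eq_abs]

lemma norm_one_le [DecidableEq β] : ‖(1 : Matrix β β ℂ)‖ ≤ 1 := by
  apply opNorm_le _ zero_le_one
  intro x; rw [Matrix.one_mulVec, one_mul]

lemma mul_submatrix_id {δ : Type*} (M : Matrix α β ℂ) (N : Matrix β γ ℂ) (f : δ → γ) :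
    M * (N.submatrix id f) = (M * N).submatrix id f := by
  ext i j; simp [Matrix.mul_apply]

lemma submatrix_id_mul {δ : Type*} (M : Matrix α β ℂ) (N : Matrix β γ ℂ) (f : δ → α) :
    (M.submatrix f id) * N = (M * N).submatrix f id := by
  ext i j; simp [Matrix.mul_apply]

end RFaux

open RFaux

set_option maxHeartbeats 1000000

/-- Range-finder bound under JL-type events.  The matrix `A` has `n = r + k`
columns, indexed by `Fin r ⊕ Fin k`, and `d = r + p`.  The quantity
`specNormC Σ₂` is the `(r+1)`-st singular value `σ_{r+1}(A)`. -/
theorem stmt4 {m r k p : ℕ}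
    (A U : Matrix (Fin m) (Fin r ⊕ Fin k) ℂ)
    (V : Matrix (Fin r ⊕ Fin k) (Fin r ⊕ Fin k) ℂ)
    (s : Fin r ⊕ Fin k → ℝ)
    (hU : Uᴴ * U = 1) (hV : Vᴴ * V = 1)
    (hs0 : ∀ i, 0 ≤ s i)
    (hsmono : ∀ i j : Fin (r + k), i ≤ j →
      s (finSumFinEquiv.symm j) ≤ s (finSumFinEquiv.symm i))
    (hA : A = U * Matrix.diagonal (fun i => (s i : ℂ)) * Vᴴ)
    (R : Matrix (Fin (r + p)) (Fin r ⊕ Fin k) ℝ)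
    (ε : ℝ) (hε : ε ∈ Set.Ioo (0:ℝ) 1)
    -- ‖R‖ ≤ √(n(1+ε)):
    (hRnorm : specNorm R ≤ Real.sqrt ((r + k) * (1 + ε)))
    -- σ_min(R V₁)² ≥ 1 − ε:
    (hsmin : 1 - ε ≤
      sigmaMinC ((R.map (fun a => (a : ℂ))) * V.submatrix id Sum.inl) ^ 2)
    -- the sketch `Y = A Rᵀ` and the orthogonal projector onto its column space:
    (Y : Matrix (Fin m) (Fin (r + p)) ℂ)
    (hY : Y = A * (Rᵀ.map (fun a => (a : ℂ))))
    (P : Matrix (Fin m) (Fin m) ℂ)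
    (hP1 : P.IsHermitian) (hP2 : P * P = P)
    (hP3 : LinearMap.range P.mulVecLin = LinearMap.range Y.mulVecLin) :
    specNormC ((1 - P) * A) ≤
      specNormC (Matrix.diagonal (fun i : Fin k => (s (Sum.inr i) : ℂ))) *
        Real.sqrt (1 + (r + k) * (1 + ε) / (1 - ε)) := by
  classical
  obtain ⟨hε0, hε1⟩ := hε
  have hc : (0:ℝ) < 1 - ε := by linarith
  set Rc : Matrix (Fin (r+p)) (Fin r ⊕ Fin k) ℂ := R.map (fun a => (a:ℂ)) with hRc
  set Rt : Matrix (Fin r ⊕ Fin k) (Fin (r+p)) ℂ := Rᵀ.map (fun a => (a:ℂ)) with hRt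
  have hRtRc : Rt = Rcᴴ := by
    ext i j
    simp [hRc, hRt, Matrix.conjTranspose_apply, Complex.conj_ofReal]
  set V₁ := V.submatrix id Sum.inl with hV₁
  set V₂ := V.submatrix id Sum.inr with hV₂
  set B := Rc * V₁ with hB
  -- lower bound on B from hsmin
  have hBlow : ∀ x : Fin r → ℂ, (1 - ε) * en x ^ 2 ≤ en (B *ᵥ x) ^ 2 := by
    intro x
    rcases eq_or_ne (en x) 0 with h0 | h0
    · rw [en_eq_zero h0, Matrix.mulVec_zero]
      simp [en_zero]
    · have hxpos : 0 < en x := lt_of_le_of_ne (en_nonneg x) (Ne.symm h0)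
      set u : Fin r → ℂ := ((en x : ℂ))⁻¹ • x with hu
      have hu1 : en u = 1 := by
        rw [hu, en_smul_inv, abs_of_pos hxpos]
        exact inv_mul_cancel₀ h0
      have hmem : vnormC (B *ᵥ u) ∈
          {c : ℝ | ∃ y : Fin r → ℂ, vnormC y = 1 ∧ c = vnormC (B.mulVec y)} :=
        ⟨u, by rw [vnormC_eq, hu1], rfl⟩
      have hbdd : BddBelow {c : ℝ | ∃ y : Fin r → ℂ, vnormC y = 1 ∧ c = vnormC (B.mulVec y)} :=
        ⟨0, by rintro c ⟨y, hy, rfl⟩; exact Real.sqrt_nonneg _⟩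
      have hnn : 0 ≤ sigmaMinC B :=
        Real.sInf_nonneg (by rintro c ⟨y, hy, rfl⟩; exact Real.sqrt_nonneg _)
      have hle : sigmaMinC B ≤ vnormC (B *ᵥ u) := csInf_le hbdd hmem
      have hsq : 1 - ε ≤ vnormC (B *ᵥ u) ^ 2 :=
        le_trans hsmin (pow_le_pow_left₀ hnn hle 2)
      have hBu : vnormC (B *ᵥ u) = (en x)⁻¹ * en (B *ᵥ x) := by
        rw [vnormC_eq, hu, Matrix.mulVec_smul, en_smul_inv, abs_of_pos hxpos]
      rw [hBu] at hsq
      calc (1 - ε) * en x ^ 2 ≤ ((en x)⁻¹ * en (B *ᵥ x)) ^ 2 * en x ^ 2 :=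
            mul_le_mul_of_nonneg_right hsq (sq_nonneg _)
        _ = en (B *ᵥ x) ^ 2 := by field_simp
  obtain ⟨G, hG1, hG2⟩ := pinv_exists B hc hBlow
  have hBH : Bᴴ = V₁ᴴ * Rt := by rw [hB, Matrix.conjTranspose_mul, hRtRc]
  set F : Matrix (Fin k) (Fin r) ℂ := (V₂ᴴ * Rt) * G with hF
  -- submatrix identities
  have hV1HV : V₁ᴴ * V = (1 : Matrix (Fin r ⊕ Fin k) (Fin r ⊕ Fin k) ℂ).submatrix Sum.inl id := by
    rw [hV₁, Matrix.conjTranspose_submatrix, submatrix_id_mul, hV]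
  have hV2HV : V₂ᴴ * V = (1 : Matrix (Fin r ⊕ Fin k) (Fin r ⊕ Fin k) ℂ).submatrix Sum.inr id := by
    rw [hV₂, Matrix.conjTranspose_submatrix, submatrix_id_mul, hV]
  have hV2V2 : V₂ᴴ * V₂ = 1 := by
    rw [hV₂, Matrix.conjTranspose_submatrix, mul_submatrix_id, submatrix_id_mul, hV]
    ext i j
    simp [Matrix.one_apply]
  have hU2U2 : (U.submatrix id Sum.inr)ᴴ * (U.submatrix id Sum.inr) = 1 := by
    rw [Matrix.conjTranspose_submatrix, mul_submatrix_id, submatrix_id_mul, hU]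
    ext i j
    simp [Matrix.one_apply]
  have hVVh : V * Vᴴ = 1 := mul_eq_one_comm.mp hV
  have hVVsum : V₁ * V₁ᴴ + V₂ * V₂ᴴ = 1 := by
    rw [← hVVh]
    ext i j
    simp [hV₁, hV₂, Matrix.mul_apply, Matrix.conjTranspose_apply, Matrix.submatrix_apply,
      Fintype.sum_sum_type]
  -- A V₂ = U₂ S2
  set S2 : Matrix (Fin k) (Fin k) ℂ := Matrix.diagonal (fun i : Fin k => (s (Sum.inr i) : ℂ)) with hS2
  have hAV2 : A * V₂ = (U.submatrix id Sum.inr) * S2 := by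
    rw [hA, hV₂, Matrix.mul_assoc (U * Matrix.diagonal fun i => (s i : ℂ)) Vᴴ _,
      mul_submatrix_id Vᴴ V Sum.inr, hV]
    ext i j
    simp [Matrix.mul_apply, Matrix.diagonal_apply, Matrix.submatrix_apply, Matrix.one_apply,
      mul_ite, ite_mul, hS2, Finset.sum_ite_eq, Finset.sum_ite_eq']
  -- P absorbs Y
  have hPY : P * Y = Y := by
    ext i j
    have hYj : Y.mulVecLin (Pi.single j 1) ∈ LinearMap.range P.mulVecLin := by
      rw [hP3]; exact ⟨_, rfl⟩
    obtain ⟨u, hu⟩ := hYj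
    have h2 : P *ᵥ (Y *ᵥ (Pi.single j 1 : Fin (r+p) → ℂ)) = Y *ᵥ Pi.single j 1 := by
      rw [show Y *ᵥ (Pi.single j 1 : Fin (r+p) → ℂ) = Y.mulVecLin (Pi.single j 1) from rfl,
        ← hu]
      show P *ᵥ (P *ᵥ u) = P *ᵥ u
      rw [Matrix.mulVec_mulVec, hP2]
    have h3 := congrFun h2 i
    rw [Matrix.mulVec_mulVec] at h3
    have h4 : ((P * Y) *ᵥ (Pi.single j 1 : Fin (r+p) → ℂ)) i = (P * Y) i j := by
      rw [Matrix.mulVec_single]; exact mul_one _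
    have h5 : (Y *ᵥ (Pi.single j 1 : Fin (r+p) → ℂ)) i = Y i j := by
      rw [Matrix.mulVec_single]; exact mul_one _
    rw [h4, h5] at h3
    exact h3
  -- key algebraic identity
  have hΩ1G : (V₁ᴴ * Rt) * G = 1 := by rw [← hBH, hG1]
  have hA1 : A = (A * V₁) * V₁ᴴ + (A * V₂) * V₂ᴴ := by
    rw [Matrix.mul_assoc, Matrix.mul_assoc, ← Matrix.mul_add, hVVsum, Matrix.mul_one]
  have hYX : Y * (G * V₁ᴴ) = (A * V₁) * V₁ᴴ + ((A * V₂) * F) * V₁ᴴ := by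
    have hARt : Y = (A * V₁) * (V₁ᴴ * Rt) + (A * V₂) * (V₂ᴴ * Rt) := by
      rw [hY]
      nth_rewrite 1 [hA1]
      rw [Matrix.add_mul, Matrix.mul_assoc (A * V₁) V₁ᴴ Rt, Matrix.mul_assoc (A * V₂) V₂ᴴ Rt]
    rw [hARt, Matrix.add_mul]
    congr 1
    · rw [Matrix.mul_assoc (A * V₁) (V₁ᴴ * Rt) (G * V₁ᴴ), ← Matrix.mul_assoc (V₁ᴴ * Rt) G V₁ᴴ,
        hΩ1G, Matrix.one_mul]
    · rw [Matrix.mul_assoc (A * V₂) (V₂ᴴ * Rt) (G * V₁ᴴ), ← Matrix.mul_assoc (V₂ᴴ * Rt) G V₁ᴴ,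
        ← hF, Matrix.mul_assoc (A * V₂) F V₁ᴴ]
  have hKey : A - Y * (G * V₁ᴴ) = (A * V₂) * (V₂ᴴ - F * V₁ᴴ) := by
    rw [hYX, Matrix.mul_sub]
    nth_rewrite 1 [hA1]
    rw [Matrix.mul_assoc (A * V₂) F V₁ᴴ]
    abel
  have h1PA : (1 - P) * A = (1 - P) * ((A * V₂) * (V₂ᴴ - F * V₁ᴴ)) := by
    rw [← hKey, Matrix.mul_sub]
    have hz : (1 - P) * (Y * (G * V₁ᴴ)) = 0 := by
      rw [← Matrix.mul_assoc, Matrix.sub_mul, Matrix.one_mul, hPY, sub_self, Matrix.zero_mul]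
    rw [hz, sub_zero]
  -- norm bounds
  have h1P : ‖(1 : Matrix (Fin m) (Fin m) ℂ) - P‖ ≤ 1 := by
    apply norm_le_one_of_proj
    · rw [Matrix.conjTranspose_sub, Matrix.conjTranspose_one, hP1.eq]
    · simp only [Matrix.sub_mul, Matrix.mul_sub, Matrix.one_mul, Matrix.mul_one, hP2]
      abel
  have hAV2n : ‖A * V₂‖ ≤ ‖S2‖ := by
    rw [hAV2]
    calc ‖(U.submatrix id Sum.inr) * S2‖ ≤ ‖U.submatrix id Sum.inr‖ * ‖S2‖ :=
          Matrix.l2_opNorm_mul _ _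
      _ ≤ 1 * ‖S2‖ :=
          mul_le_mul_of_nonneg_right (norm_le_one_of_isometry _ hU2U2) (norm_nonneg _)
      _ = ‖S2‖ := one_mul _
  -- bound on ‖F‖
  have hRcn : ‖Rc‖ ≤ Real.sqrt ((r + k) * (1 + ε)) :=
    le_trans (map_complex_norm_le R) (le_trans (opNorm_le_specNorm R) hRnorm)
  have hRtn : ‖Rt‖ ≤ Real.sqrt ((r + k) * (1 + ε)) := by
    rw [hRtRc, Matrix.l2_opNorm_conjTranspose]
    exact hRcn
  have hV2Hn : ‖V₂ᴴ‖ ≤ 1 := by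
    rw [Matrix.l2_opNorm_conjTranspose]
    exact norm_le_one_of_isometry _ hV2V2
  have hFn : ‖F‖ ≤ Real.sqrt ((r + k) * (1 + ε)) * Real.sqrt (1 / (1 - ε)) := by
    rw [hF]
    calc ‖(V₂ᴴ * Rt) * G‖ ≤ ‖V₂ᴴ * Rt‖ * ‖G‖ := Matrix.l2_opNorm_mul _ _
      _ ≤ (‖V₂ᴴ‖ * ‖Rt‖) * ‖G‖ :=
          mul_le_mul_of_nonneg_right (Matrix.l2_opNorm_mul _ _) (norm_nonneg _)
      _ ≤ (1 * Real.sqrt ((r + k) * (1 + ε))) * Real.sqrt (1 / (1 - ε)) := by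
          apply mul_le_mul _ hG2 (norm_nonneg _) (by positivity)
          exact mul_le_mul hV2Hn hRtn (norm_nonneg _) zero_le_one
      _ = Real.sqrt ((r + k) * (1 + ε)) * Real.sqrt (1 / (1 - ε)) := by rw [one_mul]
  have hF2 : ‖F‖ ^ 2 ≤ (r + k) * (1 + ε) / (1 - ε) := by
    have ha : (0:ℝ) ≤ (r + k) * (1 + ε) := by positivity
    have h1 : Real.sqrt ((r + k) * (1 + ε)) * Real.sqrt (1 / (1 - ε))
        = Real.sqrt ((r + k) * (1 + ε) / (1 - ε)) := by
      rw [← Real.sqrt_mul ha, mul_one_div]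
    have h2 := pow_le_pow_left₀ (norm_nonneg F) hFn 2
    rw [h1, Real.sq_sqrt (by positivity)] at h2
    exact h2
  -- bound on ‖V₂ᴴ - F V₁ᴴ‖
  have hWV : (V₂ᴴ - F * V₁ᴴ) * V = Matrix.fromCols (-F) 1 := by
    rw [Matrix.sub_mul, Matrix.mul_assoc, hV1HV, hV2HV]
    ext i j
    cases j with
    | inl j =>
        simp [Matrix.fromCols, Matrix.mul_apply, Matrix.one_apply, Matrix.submatrix_apply,
          Finset.sum_ite_eq, Finset.sum_ite_eq']
    | inr j =>
        simp [Matrix.fromCols, Matrix.mul_apply, Matrix.one_apply, Matrix.submatrix_apply,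
          Finset.sum_ite_eq, Finset.sum_ite_eq']
  have hWn : ‖V₂ᴴ - F * V₁ᴴ‖ ≤ Real.sqrt (1 + (r + k) * (1 + ε) / (1 - ε)) := by
    have hVHiso : ‖Vᴴ‖ ≤ 1 := by
      apply norm_le_one_of_isometry
      rw [Matrix.conjTranspose_conjTranspose]
      exact hVVh
    have hid : (V₂ᴴ - F * V₁ᴴ) = ((V₂ᴴ - F * V₁ᴴ) * V) * Vᴴ := by
      rw [Matrix.mul_assoc (V₂ᴴ - F * V₁ᴴ) V Vᴴ, hVVh, Matrix.mul_one]
    calc ‖V₂ᴴ - F * V₁ᴴ‖ = ‖((V₂ᴴ - F * V₁ᴴ) * V) * Vᴴ‖ := by rw [← hid]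
      _ ≤ ‖(V₂ᴴ - F * V₁ᴴ) * V‖ * ‖Vᴴ‖ := Matrix.l2_opNorm_mul _ _
      _ ≤ ‖(V₂ᴴ - F * V₁ᴴ) * V‖ * 1 :=
          mul_le_mul_of_nonneg_left hVHiso (norm_nonneg _)
      _ = ‖Matrix.fromCols (-F) 1‖ := by rw [mul_one, hWV]
      _ ≤ Real.sqrt (‖(-F : Matrix (Fin k) (Fin r) ℂ)‖ ^ 2 + ‖(1 : Matrix (Fin k) (Fin k) ℂ)‖ ^ 2) :=
          fromColumns_norm_le _ _
      _ ≤ Real.sqrt (1 + (r + k) * (1 + ε) / (1 - ε)) := by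
          apply Real.sqrt_le_sqrt
          rw [norm_neg]
          have hone : ‖(1 : Matrix (Fin k) (Fin k) ℂ)‖ ^ 2 ≤ 1 := by
            have := norm_one_le (β := Fin k)
            nlinarith [norm_nonneg (1 : Matrix (Fin k) (Fin k) ℂ)]
          linarith [hF2]
  -- final chain
  rw [specNormC_eq, specNormC_eq]
  calc ‖(1 - P) * A‖ = ‖(1 - P) * ((A * V₂) * (V₂ᴴ - F * V₁ᴴ))‖ := by rw [h1PA]
    _ ≤ ‖(1 : Matrix (Fin m) (Fin m) ℂ) - P‖ * ‖(A * V₂) * (V₂ᴴ - F * V₁ᴴ)‖ :=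
        Matrix.l2_opNorm_mul _ _
    _ ≤ 1 * ‖(A * V₂) * (V₂ᴴ - F * V₁ᴴ)‖ :=
        mul_le_mul_of_nonneg_right h1P (norm_nonneg _)
    _ = ‖(A * V₂) * (V₂ᴴ - F * V₁ᴴ)‖ := one_mul _
    _ ≤ ‖A * V₂‖ * ‖V₂ᴴ - F * V₁ᴴ‖ := Matrix.l2_opNorm_mul _ _
    _ ≤ ‖S2‖ * Real.sqrt (1 + (r + k) * (1 + ε) / (1 - ε)) :=
        mul_le_mul hAV2n hWn (norm_nonneg _) (norm_nonneg _)
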